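/- Let P be a pattern containing an isolated variable (a variable occurring exactly once in P), and suppose P is unavoidable over the k-letter alphabet (every infinite word over Σ_k contains an occurrence of P). Then every infinite word over Σ_k contains infinitely many distinct occurrences of P, i.e., oc_k(P) = ∞. -/

import Mathlib

/-- `u` is a factor of the infinite word `w : ℕ → α`. -/
def FactorN {α : Type*} (w : ℕ → α) (u : List α) : Prop :=
  ∃ i : ℕ, ∀ k : ℕ, (h : k < u.length) → u[k]'h = w (i + k)

private lemma flatMap_eq_of_eqOn {V β : Type*} (L : List V) (f g : V → List β)
    (h : ∀ y ∈ L, f y = g y) : L.flatMap f = L.flatMap g := by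
  induction L with
  | nil => rfl
  | cons a t ih =>
    simp only [List.flatMap_cons]
    rw [h a (by simp), ih (fun y hy => h y (by simp [hy]))]

/-- If a pattern `P` (a word over variables `V`) has an isolated variable and is
`k`-unavoidable, then every infinite word over `Σ_k` contains infinitely many
distinct occurrences of `P`.  Occurrences are normalized so that variables not
appearing in `P` are sent to the empty word; distinctness is thus equality of
the assignments on the variables of `P`. -/
theorem isolated_unavoidable_infinitely_many_occurrences
    {V : Type*} [DecidableEq V] (k : ℕ) (P : List V)
    (hiso : ∃ x : V, P.count x = 1)
    (hunav : ∀ w : ℕ → Fin k, ∃ g : V → List (Fin k),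
      (∀ x ∈ P, g x ≠ []) ∧ FactorN w (P.flatMap g)) :
    ∀ w : ℕ → Fin k,
      {g : V → List (Fin k) | (∀ x ∈ P, g x ≠ []) ∧ (∀ x ∉ P, g x = []) ∧
        FactorN w (P.flatMap g)}.Infinite := by
  obtain ⟨x, hxc⟩ := hiso
  intro w
  by_contra hinf
  rw [Set.not_infinite] at hinf
  set S : Set (V → List (Fin k)) :=
    {g : V → List (Fin k) | (∀ x ∈ P, g x ≠ []) ∧ (∀ x ∉ P, g x = []) ∧
      FactorN w (P.flatMap g)} with hSdef
  -- Step A: for each n, a normalized occurrence in S at some position ≥ n.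
  have key : ∀ n : ℕ, ∃ g ∈ S, ∃ p, n ≤ p ∧
      ∀ t : ℕ, (ht : t < (P.flatMap g).length) →
        (P.flatMap g)[t]'ht = w (p + t) := by
    intro n
    obtain ⟨g, hg1, i, hi⟩ := hunav (fun j => w (n + j))
    refine ⟨fun y => if y ∈ P then g y else [], ?_, n + i, Nat.le_add_right _ _, ?_⟩
    · have hfe : P.flatMap (fun y => if y ∈ P then g y else []) = P.flatMap g :=
        flatMap_eq_of_eqOn _ _ _ (fun y hy => by simp [hy])
      refine ⟨fun y hy => by simpa [hy] using hg1 y hy, fun y hy => by simp [hy], ?_⟩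
      rw [hfe]
      exact ⟨n + i, fun t ht => by
        have := hi t ht
        simpa [Nat.add_assoc] using this⟩
    · have hfe : P.flatMap (fun y => if y ∈ P then g y else []) = P.flatMap g :=
        flatMap_eq_of_eqOn _ _ _ (fun y hy => by simp [hy])
      rw [hfe]
      intro t ht
      have := hi t ht
      simpa [Nat.add_assoc] using this
  choose gseq hgS pseq hnp hocc using key
  -- Step B: pigeonhole to find one g₀ ∈ S occurring at unboundedly large positions.
  haveI : Finite S := hinf.to_subtype
  obtain ⟨⟨g0, hg0⟩, hfib⟩ :=
    Finite.exists_infinite_fiber (fun n : ℕ => (⟨gseq n, hgS n⟩ : S))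
  have hfib' : ((fun n : ℕ => (⟨gseq n, hgS n⟩ : S)) ⁻¹' {⟨g0, hg0⟩}).Infinite :=
    Set.infinite_coe_iff.mp hfib
  have hmem : ∀ n ∈ ((fun n : ℕ => (⟨gseq n, hgS n⟩ : S)) ⁻¹' {⟨g0, hg0⟩}),
      gseq n = g0 := by
    intro n hn
    exact congrArg Subtype.val (Set.mem_singleton_iff.mp hn)
  obtain ⟨n0, hn0⟩ := hfib'.nonempty
  set i := pseq n0 with hi_def
  have hg0eq : gseq n0 = g0 := hmem n0 hn0
  have occ_i : ∀ t : ℕ, (ht : t < (P.flatMap g0).length) →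
      (P.flatMap g0)[t]'ht = w (i + t) := by
    rw [← hg0eq]; exact hocc n0
  -- bound on lengths of the x-images over S
  have hLfin : ((fun g : V → List (Fin k) => (g x).length) '' S).Finite :=
    hinf.image _
  obtain ⟨M, hM⟩ := hLfin.bddAbove
  -- choose a much later occurrence of the same g0
  obtain ⟨n1, hn1fib, hn1gt⟩ := hfib'.exists_gt (i + M + 1)
  set p := pseq n1 with hp_def
  have hip : i + M + 1 < p := lt_of_lt_of_le hn1gt (hnp n1)
  have hg1eq : gseq n1 = g0 := hmem n1 hn1fib
  have occ_p : ∀ t : ℕ, (ht : t < (P.flatMap g0).length) →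
      (P.flatMap g0)[t]'ht = w (p + t) := by
    rw [← hg1eq]; exact hocc n1
  -- decompose P around the isolated variable x
  have hxP : x ∈ P := by
    have : 0 < P.count x := by omega
    exact List.count_pos_iff.mp this
  obtain ⟨A, B, hPAB⟩ := List.append_of_mem hxP
  have hcAB : A.count x = 0 ∧ B.count x = 0 := by
    rw [hPAB] at hxc
    simp [List.count_append, List.count_cons] at hxc
    omega
  have hxA : x ∉ A := List.count_eq_zero.mp hcAB.1
  have hxB : x ∉ B := List.count_eq_zero.mp hcAB.2
  set Ag := A.flatMap g0 with hAg
  set Bg := B.flatMap g0 with hBg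
  set a := Ag.length
  set m := (g0 x).length
  set b := Bg.length
  have hu : P.flatMap g0 = Ag ++ (g0 x ++ Bg) := by
    rw [hPAB]
    simp [List.flatMap_append, List.flatMap_cons]
    rfl
  have hulen : (P.flatMap g0).length = a + (m + b) := by
    rw [hu]; simp [a, m, b]
  have occ_i' : ∀ t : ℕ, (ht : t < (Ag ++ (g0 x ++ Bg)).length) →
      (Ag ++ (g0 x ++ Bg))[t]'ht = w (i + t) := by
    rw [← hu]; exact occ_i
  have occ_p' : ∀ t : ℕ, (ht : t < (Ag ++ (g0 x ++ Bg)).length) →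
      (Ag ++ (g0 x ++ Bg))[t]'ht = w (p + t) := by
    rw [← hu]; exact occ_p
  have hm1 : 1 ≤ m := by
    have := hg0.1 x hxP
    have := List.length_pos_iff.mpr this
    omega
  set d := p - i with hd_def
  have hd : M < d := by omega
  -- the new occurrence: stretch x across to the later occurrence
  set X : List (Fin k) := (List.range (m + d)).map (fun t => w (i + a + t)) with hX
  have hXlen : X.length = m + d := by simp [hX]
  set h' : V → List (Fin k) := fun y => if y = x then X else g0 y with hh'
  have hflatA : A.flatMap h' = Ag := by
    refine flatMap_eq_of_eqOn _ _ _ (fun y hy => ?_)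
    have : y ≠ x := fun h => hxA (h ▸ hy)
    simp [hh', this]
  have hflatB : B.flatMap h' = Bg := by
    refine flatMap_eq_of_eqOn _ _ _ (fun y hy => ?_)
    have : y ≠ x := fun h => hxB (h ▸ hy)
    simp [hh', this]
  have hflat : P.flatMap h' = Ag ++ (X ++ Bg) := by
    rw [hPAB]
    simp only [List.flatMap_append, List.flatMap_cons, hflatA, hflatB]
    simp [hh']
  have hh'S : h' ∈ S := by
    refine ⟨?_, ?_, ?_⟩
    · intro y hy
      by_cases hyx : y = x
      · subst hyx
        simp only [hh', if_pos rfl]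
        intro hXnil
        have := hXlen
        rw [hXnil] at this
        simp at this
        omega
      · simpa [hh', hyx] using hg0.1 y hy
    · intro y hy
      have hyx : y ≠ x := fun h => hy (h ▸ hxP)
      simpa [hh', hyx] using hg0.2.1 y hy
    · rw [hflat]
      refine ⟨i, fun t ht => ?_⟩
      have hlen : (Ag ++ (X ++ Bg)).length = a + (m + d + b) := by
        simp [hXlen, a, b]
      rw [hlen] at ht
      by_cases h1 : t < a
      · rw [List.getElem_append_left h1]
        have hb : t < (Ag ++ (g0 x ++ Bg)).length := by
          simp only [List.length_append]; omega
        have := occ_i' t hb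
        rw [List.getElem_append_left h1] at this
        exact this
      · push_neg at h1
        rw [List.getElem_append_right h1]
        by_cases h2 : t - a < m + d
        · have h2' : t - a < X.length := by rw [hXlen]; exact h2
          rw [List.getElem_append_left h2']
          simp only [hX, List.getElem_map, List.getElem_range]
          congr 1
          omega
        · push_neg at h2
          have h2' : X.length ≤ t - a := by rw [hXlen]; exact h2
          rw [List.getElem_append_right h2']
          set s := t - a - X.length with hs
          have hsb : s < b := by
            have := hXlen
            omega
          have hb2 : a + m + s < (Ag ++ (g0 x ++ Bg)).length := by
            simp only [List.length_append]; omega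
          have := occ_p' (a + m + s) hb2
          have hge1 : a ≤ a + m + s := by omega
          rw [List.getElem_append_right hge1] at this
          have hge2 : (g0 x).length ≤ a + m + s - a := by omega
          rw [List.getElem_append_right hge2] at this
          convert this using 2 <;> omega
  -- contradiction: the x-image of h' is too long
  have hle : (h' x).length ≤ M :=
    hM (Set.mem_image_of_mem (fun g : V → List (Fin k) => (g x).length) hh'S)
  have : (h' x).length = m + d := by
    simp only [hh', if_pos rfl]; exact hXlen
  omega
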